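/- The Dirichlet kernels are uniformly bounded in the Alexiewicz norm: for every integer n ≥ 0, the Dirichlet kernel D_n(t) = Σ_{k=−n}^{n} e^{ikt} satisfies ‖D_n‖_T ≤ 4π, i.e. sup{ |∫_α^β D_n(t) dt| : α, β ∈ ℝ, α ≤ β ≤ α + 2π } ≤ 4π. -/

import Mathlib

open MeasureTheory Real

noncomputable def Fd (n : ℕ) (x : ℝ) : ℝ :=
  x + 2 * ∑ k ∈ Finset.range n, Real.sin (((k : ℝ)+1) * x) / ((k : ℝ)+1)

lemma dirich_id (n : ℕ) (t : ℝ) :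
    (1 + 2 * ∑ k ∈ Finset.range n, Real.cos (((k : ℝ)+1)*t)) * Real.sin (t/2)
      = Real.sin (((n:ℝ)+1/2)*t) := by
  induction n with
  | zero => simp; ring_nf
  | succ n ih =>
    rw [Finset.sum_range_succ]
    have h3 : ((n:ℝ) + 1/2) * t = ((n:ℝ)+1)*t - t/2 := by ring
    rw [h3, Real.sin_sub] at ih
    push_cast
    rw [show ((n:ℝ) + 1 + 1/2) * t = ((n:ℝ)+1)*t + t/2 by ring, Real.sin_add]
    linear_combination ih

lemma remainder_bound (n : ℕ) {x : ℝ} (hx : 0 < x) (hxpi : x ≤ π) :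
    |∫ t in x..π, (1 + 2 * ∑ k ∈ Finset.range n, Real.cos (((k : ℝ)+1)*t))|
      ≤ 2 * (Real.sin (x/2))⁻¹ / ((n:ℝ)+1/2) := by
  set l : ℝ := (n:ℝ)+1/2 with hl
  have hlpos : 0 < l := by positivity
  have hsinpos : ∀ t ∈ Set.Icc x π, 0 < Real.sin (t/2) := by
    intro t ht
    apply Real.sin_pos_of_pos_of_lt_pi
    · linarith [ht.1]
    · nlinarith [ht.2, Real.pi_pos]
  -- rewrite integrand
  have heq : Set.EqOn (fun t => 1 + 2 * ∑ k ∈ Finset.range n, Real.cos (((k : ℝ)+1)*t))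
      (fun t => (Real.sin (t/2))⁻¹ * Real.sin (l*t)) (Set.uIcc x π) := by
    intro t ht
    rw [Set.uIcc_of_le hxpi] at ht
    have hs := hsinpos t ht
    have := dirich_id n t
    field_simp
    rw [show t * l = ((n:ℝ) + 1/2) * t by rw [hl]; ring]
    linarith [this]
  rw [intervalIntegral.integral_congr heq]
  -- setup derivatives
  set u : ℝ → ℝ := fun t => (Real.sin (t/2))⁻¹ with hu
  set u' : ℝ → ℝ := fun t => -(Real.cos (t/2) * 2⁻¹) / (Real.sin (t/2))^2 with hu'
  set v : ℝ → ℝ := fun t => -Real.cos (l*t)/l with hv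
  have hderivu : ∀ t ∈ Set.uIcc x π, HasDerivAt u (u' t) t := by
    intro t ht
    rw [Set.uIcc_of_le hxpi] at ht
    have h1 : HasDerivAt (fun t : ℝ => Real.sin (t/2)) (Real.cos (t/2) * (1/2)) t := by
      have := (Real.hasDerivAt_sin (t/2)).comp t ((hasDerivAt_id t).div_const 2)
      simpa [Function.comp_def] using this
    have := h1.inv (ne_of_gt (hsinpos t ht))
    exact this.congr_deriv (by rw [hu']; norm_num)
  have hderivv : ∀ t ∈ Set.uIcc x π, HasDerivAt v (Real.sin (l*t)) t := by
    intro t _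
    have h1 : HasDerivAt (fun t : ℝ => Real.cos (l*t)) (-Real.sin (l*t) * l) t := by
      have := (Real.hasDerivAt_cos (l*t)).comp t ((hasDerivAt_id t).const_mul l)
      simpa [Function.comp_def] using this
    have := (h1.neg).div_const l
    exact this.congr_deriv (by field_simp [hlpos.ne'])
  have hcontu' : ContinuousOn u' (Set.uIcc x π) := by
    rw [Set.uIcc_of_le hxpi]
    apply ContinuousOn.div
    · fun_prop
    · fun_prop
    · intro t ht
      exact pow_ne_zero 2 (ne_of_gt (hsinpos t ht))
  have hintu' : IntervalIntegrable u' volume x π := hcontu'.intervalIntegrable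
  have hintv' : IntervalIntegrable (fun t => Real.sin (l*t)) volume x π := by
    apply Continuous.intervalIntegrable; fun_prop
  have ibp := intervalIntegral.integral_mul_deriv_eq_deriv_mul hderivu hderivv hintu' hintv'
  -- compute boundary values
  have hvpi : v π = 0 := by
    have : Real.cos (l*π) = 0 := by
      rw [show l*π = (n:ℝ)*π + π/2 by rw [hl]; ring, Real.cos_add]
      simp [Real.sin_nat_mul_pi, Real.cos_pi_div_two]
    simp [hv, this]
  have hupi : u π = 1 := by simp [hu]
  rw [hvpi] at ibp
  -- bound the remaining integral
  have hxlex : x ≤ π := hxpi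
  have hub : ∀ t ∈ Set.Icc x π, ‖u' t * v t‖ ≤ (-u' t) * (1/l) := by
    intro t ht
    have hs := hsinpos t ht
    have hc : 0 ≤ Real.cos (t/2) := by
      apply Real.cos_nonneg_of_mem_Icc
      constructor <;> [linarith [ht.1, Real.pi_pos]; linarith [ht.2]]
    have hu'le : u' t ≤ 0 := by
      rw [hu']
      apply div_nonpos_of_nonpos_of_nonneg
      · nlinarith
      · positivity
    have hvle : |v t| ≤ 1/l := by
      rw [hv, abs_div, abs_neg, abs_of_pos hlpos]
      gcongr
      exact Real.abs_cos_le_one _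
    rw [norm_mul, Real.norm_eq_abs, Real.norm_eq_abs, abs_of_nonpos hu'le]
    exact mul_le_mul_of_nonneg_left hvle (by linarith)
  -- integrability of the dominating function
  have hintdom : IntervalIntegrable (fun t => (-u' t) * (1/l)) volume x π := by
    exact ((hcontu'.neg).mul continuousOn_const).intervalIntegrable
  have hintnorm : IntervalIntegrable (fun t => ‖u' t * v t‖) volume x π := by
    apply ContinuousOn.intervalIntegrable
    apply ContinuousOn.norm
    apply hcontu'.mul
    rw [Set.uIcc_of_le hxpi]
    fun_prop
  have huval : ∫ t in x..π, u' t = u π - u x :=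
    intervalIntegral.integral_eq_sub_of_hasDerivAt hderivu hintu'
  have hbd1 : |∫ t in x..π, u' t * v t| ≤ (u x - 1) * (1/l) := by
    calc |∫ t in x..π, u' t * v t| ≤ ∫ t in x..π, ‖u' t * v t‖ := by
          simpa [Real.norm_eq_abs] using intervalIntegral.norm_integral_le_integral_norm (f := fun t => u' t * v t) hxpi
      _ ≤ ∫ t in x..π, (-u' t) * (1/l) := intervalIntegral.integral_mono_on hxpi hintnorm hintdom hub
      _ = (u x - 1) * (1/l) := by
          rw [show (fun t => (-u' t) * (1/l)) = fun t => -(1/l) * u' t from by funext t; ring]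
          rw [intervalIntegral.integral_const_mul, huval, hupi]
          ring
  have huxpos : 0 < u x := by
    rw [hu]
    have := hsinpos x ⟨le_refl x, hxpi⟩
    positivity
  have hvxle : |v x| ≤ 1/l := by
    rw [hv, abs_div, abs_neg, abs_of_pos hlpos]
    gcongr
    exact Real.abs_cos_le_one _
  rw [ibp]
  simp only [mul_zero]
  have : |0 - u x * v x - ∫ t in x..π, u' t * v t| ≤ u x * (1/l) + (u x - 1) * (1/l) := by
    have h1 : |u x * v x| ≤ u x * (1/l) := by
      rw [abs_mul, abs_of_pos huxpos]
      exact mul_le_mul_of_nonneg_left hvxle (le_of_lt huxpos)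
    calc |0 - u x * v x - ∫ t in x..π, u' t * v t|
        ≤ |u x * v x| + |∫ t in x..π, u' t * v t| := by
          rw [zero_sub]; exact (abs_sub _ _).trans (by simp [abs_neg])
      _ ≤ u x * (1/l) + (u x - 1) * (1/l) := add_le_add h1 hbd1
  refine this.trans ?_
  have h1 : (0:ℝ) < 1/l := by positivity
  have h2 : (0:ℝ) < (Real.sin (x/2))⁻¹ := huxpos
  show (Real.sin (x/2))⁻¹ * (1/l) + ((Real.sin (x/2))⁻¹ - 1) * (1/l) ≤ 2 * (Real.sin (x/2))⁻¹ / l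
  have heq2 : 2 * (Real.sin (x/2))⁻¹ / l = (Real.sin (x/2))⁻¹ * (1/l) + (Real.sin (x/2))⁻¹ * (1/l) := by
    field_simp
    norm_num
  rw [heq2]
  have h3 : ((Real.sin (x/2))⁻¹ - 1) * (1/l) ≤ (Real.sin (x/2))⁻¹ * (1/l) :=
    mul_le_mul_of_nonneg_right (by linarith) (le_of_lt h1)
  linarith


lemma integral_D (n : ℕ) (a b : ℝ) :
    ∫ t in a..b, (1 + 2 * ∑ k ∈ Finset.range n, Real.cos (((k : ℝ)+1)*t))
      = Fd n b - Fd n a := by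
  have hint : ∀ c : ℝ, IntervalIntegrable (fun t => Real.cos (c*t)) volume a b := by
    intro c; exact (Real.continuous_cos.comp (continuous_const.mul continuous_id)).intervalIntegrable a b
  have hcos : ∀ k : ℕ, ∫ t in a..b, Real.cos (((k:ℝ)+1)*t)
      = Real.sin (((k:ℝ)+1)*b)/((k:ℝ)+1) - Real.sin (((k:ℝ)+1)*a)/((k:ℝ)+1) := by
    intro k
    have hk : ((k:ℝ)+1) ≠ 0 := by positivity
    apply intervalIntegral.integral_eq_sub_of_hasDerivAt (f := fun t => Real.sin (((k:ℝ)+1)*t)/((k:ℝ)+1))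
    · intro t ht
      have h := (Real.hasDerivAt_sin (((k:ℝ)+1)*t)).comp t ((hasDerivAt_id t).const_mul ((k:ℝ)+1))
      have h2 := h.div_const ((k:ℝ)+1)
      exact h2.congr_deriv (by field_simp)
    · exact hint _
  have hsum : IntervalIntegrable (fun t => 2 * ∑ k ∈ Finset.range n, Real.cos (((k : ℝ)+1)*t)) volume a b := by
    apply IntervalIntegrable.const_mul
    exact (continuous_finset_sum _ fun k _ => Real.continuous_cos.comp (continuous_const.mul continuous_id)).intervalIntegrable a b
  rw [intervalIntegral.integral_add (intervalIntegrable_const) hsum,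
    intervalIntegral.integral_const_mul, intervalIntegral.integral_finset_sum (fun k _ => hint _)]
  simp only [hcos]
  rw [intervalIntegral.integral_const]
  unfold Fd
  rw [Finset.sum_sub_distrib]
  simp only [smul_eq_mul, mul_one]
  ring

lemma Fd_pi (n : ℕ) : Fd n π = π := by
  unfold Fd
  have : ∀ k ∈ Finset.range n, Real.sin (((k : ℝ)+1) * π) / ((k : ℝ)+1) = 0 := by
    intro k _
    have : (((k+1 : ℕ)):ℝ) * π = ((k:ℝ)+1) * π := by push_cast; ring
    rw [← this, Real.sin_nat_mul_pi]
    simp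
  rw [Finset.sum_congr rfl this]
  simp


lemma Fd_window (n : ℕ) {x : ℝ} (h0 : 0 ≤ x) (hπ : x ≤ π) :
    0 ≤ Fd n x ∧ Fd n x ≤ 2*π := by
  set l : ℝ := (n:ℝ)+1/2 with hl
  have hlpos : 0 < l := by positivity
  by_cases hcase : 2/l ≤ x
  · have hx : 0 < x := lt_of_lt_of_le (by positivity) hcase
    have hint := remainder_bound n hx hπ
    have hFd : Fd n x = π - ∫ t in x..π, (1 + 2 * ∑ k ∈ Finset.range n, Real.cos (((k : ℝ)+1)*t)) := by
      rw [integral_D n x π, Fd_pi]; ring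
    have hsin : x/π ≤ Real.sin (x/2) := by
      have := Real.mul_le_sin (x := x/2) (by positivity) (by linarith)
      calc x/π = 2/π * (x/2) := by ring
        _ ≤ Real.sin (x/2) := this
    have hsinpos : 0 < Real.sin (x/2) := lt_of_lt_of_le (by positivity) hsin
    have hinv : (Real.sin (x/2))⁻¹ ≤ π/x := by
      rw [inv_eq_one_div, div_le_div_iff₀ hsinpos hx]
      have hπpos := Real.pi_pos
      rw [div_le_iff₀ hπpos] at hsin
      nlinarith
    have hbound : 2 * (Real.sin (x/2))⁻¹ / l ≤ π := by
      have h1 : 2 * (Real.sin (x/2))⁻¹ / l ≤ 2 * (π/x) / l := by gcongr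
      refine h1.trans ?_
      rw [div_le_iff₀ hlpos]
      have hxl : 2 ≤ x * l := by
        rw [div_le_iff₀ hlpos] at hcase; linarith
      have hπpos := Real.pi_pos
      have h2 : 2 * (π/x) = 2*π/x := by ring
      rw [h2, div_le_iff₀ hx]
      nlinarith
    have habs := hint.trans hbound
    rw [abs_le] at habs
    constructor <;> [linarith [hFd, habs.2]; linarith [hFd, habs.1]]
  · push_neg at hcase
    have hterm : ∀ k ∈ Finset.range n, 0 ≤ Real.sin (((k : ℝ)+1) * x) / ((k : ℝ)+1)
        ∧ Real.sin (((k : ℝ)+1) * x) / ((k : ℝ)+1) ≤ x := by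
      intro k hk
      have hkn : (k:ℝ) + 1 ≤ n := by
        have := Finset.mem_range.mp hk
        exact_mod_cast Nat.succ_le_of_lt this
      have hkpos : (0:ℝ) < (k:ℝ)+1 := by positivity
      have harg0 : 0 ≤ ((k : ℝ)+1) * x := by positivity
      have hargpi : ((k : ℝ)+1) * x ≤ π := by
        have hxl : x * ((n:ℝ)+1/2) < 2 := by
          have := (lt_div_iff₀ hlpos).mp hcase
          rw [hl] at this; exact this
        have hk1 : ((k:ℝ)+1) * x ≤ (n:ℝ) * x := mul_le_mul_of_nonneg_right hkn h0
        nlinarith [Real.pi_gt_three, hk1, hxl]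
      constructor
      · apply div_nonneg _ (le_of_lt hkpos)
        exact Real.sin_nonneg_of_nonneg_of_le_pi harg0 hargpi
      · rw [div_le_iff₀ hkpos]
        calc Real.sin (((k : ℝ)+1) * x) ≤ ((k : ℝ)+1) * x := Real.sin_le harg0
          _ = x * ((k:ℝ)+1) := by ring
    have hsum0 : 0 ≤ ∑ k ∈ Finset.range n, Real.sin (((k : ℝ)+1) * x) / ((k : ℝ)+1) :=
      Finset.sum_nonneg (fun k hk => (hterm k hk).1)
    have hsumle : ∑ k ∈ Finset.range n, Real.sin (((k : ℝ)+1) * x) / ((k : ℝ)+1) ≤ (n:ℝ) * x := by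
      calc ∑ k ∈ Finset.range n, Real.sin (((k : ℝ)+1) * x) / ((k : ℝ)+1)
          ≤ ∑ _k ∈ Finset.range n, x := Finset.sum_le_sum (fun k hk => (hterm k hk).2)
        _ = (n:ℝ) * x := by rw [Finset.sum_const, Finset.card_range]; simp [nsmul_eq_mul]
    have hxl : x * ((n:ℝ)+1/2) < 2 := by
      have := (lt_div_iff₀ hlpos).mp hcase
      rw [hl] at this; exact this
    have hpi3 := Real.pi_gt_three
    unfold Fd
    constructor
    · linarith
    · nlinarith [hsumle, hxl]


lemma Fd_neg (n : ℕ) (x : ℝ) : Fd n (-x) = -Fd n x := by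
  unfold Fd
  rw [show ∑ k ∈ Finset.range n, Real.sin (((k : ℝ)+1) * -x) / ((k : ℝ)+1)
      = -∑ k ∈ Finset.range n, Real.sin (((k : ℝ)+1) * x) / ((k : ℝ)+1) by
    rw [← Finset.sum_neg_distrib]
    apply Finset.sum_congr rfl
    intro k _
    rw [mul_neg, Real.sin_neg]; ring]
  ring

lemma Fd_shift (n : ℕ) (x : ℝ) (m : ℤ) : Fd n (x + m*(2*π)) = Fd n x + m*(2*π) := by
  unfold Fd
  rw [show ∑ k ∈ Finset.range n, Real.sin (((k : ℝ)+1) * (x + m*(2*π))) / ((k : ℝ)+1)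
      = ∑ k ∈ Finset.range n, Real.sin (((k : ℝ)+1) * x) / ((k : ℝ)+1) by
    apply Finset.sum_congr rfl
    intro k _
    congr 1
    rw [show ((k : ℝ)+1) * (x + m*(2*π)) = ((k : ℝ)+1) * x + ((k+1)*m : ℤ)*(2*π) by push_cast; ring]
    exact Real.sin_add_int_mul_two_pi _ _]
  ring

lemma Fd_abs (n : ℕ) {x : ℝ} (h1 : -π ≤ x) (h2 : x ≤ π) : |Fd n x| ≤ 2*π := by
  rcases le_or_gt 0 x with h|h
  · have := Fd_window n h h2
    rw [abs_le]; constructor <;> [linarith [Real.pi_pos]; linarith]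
  · have hx : 0 ≤ -x := by linarith
    have := Fd_window n hx (by linarith)
    rw [Fd_neg] at this
    rw [abs_le]; constructor <;> linarith

lemma Fd_diff (n : ℕ) {u v : ℝ} (huv : u ≤ v) (h1 : -π ≤ u) (h2 : v ≤ π) :
    Fd n u - Fd n v ≤ 2*π := by
  rcases le_or_gt 0 u with h|h
  · have hu := Fd_window n h (by linarith)
    have hv := Fd_window n (by linarith : (0:ℝ) ≤ v) h2
    linarith
  · have hu : Fd n u ≤ 0 := by
      have := (Fd_window n (by linarith : (0:ℝ) ≤ -u) (by linarith)).1
      rw [Fd_neg] at this; linarith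
    rcases le_or_gt 0 v with hv|hv
    · have := (Fd_window n hv h2).1
      linarith
    · have := (Fd_window n (by linarith : (0:ℝ) ≤ -v) (by linarith)).2
      rw [Fd_neg] at this; linarith

lemma Fd_main (n : ℕ) {α β : ℝ} (hab : α ≤ β) (hb : β ≤ α + 2*π) :
    |Fd n β - Fd n α| ≤ 4*π := by
  have hπ := Real.pi_pos
  set m : ℤ := ⌊(α + π)/(2*π)⌋ with hm
  have h2π : (0:ℝ) < 2*π := by linarith
  have hfl := Int.floor_le ((α + π)/(2*π))
  have hfl2 := Int.lt_floor_add_one ((α + π)/(2*π))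
  have hα1 : -π ≤ α - m*(2*π) := by
    have : (m:ℝ) * (2*π) ≤ α + π := by
      rw [le_div_iff₀ h2π] at hfl; linarith
    linarith
  have hα2 : α - m*(2*π) < π := by
    have : α + π < ((m:ℝ) + 1) * (2*π) := by
      rw [div_lt_iff₀ h2π] at hfl2; linarith
    linarith
  set α' := α - m*(2*π) with hα'
  set β' := β - m*(2*π) with hβ'
  have hshift : Fd n β - Fd n α = Fd n β' - Fd n α' := by
    have h1 : Fd n (α' + m*(2*π)) = Fd n α' + m*(2*π) := Fd_shift n α' m
    have h2 : Fd n (β' + m*(2*π)) = Fd n β' + m*(2*π) := Fd_shift n β' m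
    rw [show α' + m*(2*π) = α by rw [hα']; ring] at h1
    rw [show β' + m*(2*π) = β by rw [hβ']; ring] at h2
    rw [h1, h2]; ring
  rw [hshift]
  have hab' : α' ≤ β' := by rw [hα', hβ']; linarith
  have hb' : β' ≤ α' + 2*π := by rw [hα', hβ']; linarith
  rcases le_or_gt β' π with hcase|hcase
  · have h1 := Fd_abs n hα1 (le_of_lt hα2)
    have h2 := Fd_abs n (by linarith : -π ≤ β') hcase
    rw [abs_le] at *
    constructor <;> [linarith [h1.2, h2.1]; linarith [h1.1, h2.2]]
  · set β'' := β' - 2*π with hβ''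
    have hsh2 : Fd n β' = Fd n β'' + 2*π := by
      have := Fd_shift n β'' 1
      rw [show β'' + (1:ℤ)*(2*π) = β' by rw [hβ'']; push_cast; ring] at this
      rw [this]; push_cast; ring
    have hβ''1 : -π ≤ β'' := by rw [hβ'']; linarith
    have hβ''2 : β'' ≤ α' := by rw [hβ'', hβ']; linarith
    have hd := Fd_diff n hβ''2 hβ''1 (le_of_lt hα2)
    have h1 := Fd_abs n hα1 (le_of_lt hα2)
    have h2 := Fd_abs n hβ''1 (hβ''2.trans (le_of_lt hα2))
    rw [hsh2]
    rw [abs_le] at *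
    constructor <;> [linarith [h1.2, h2.1]; linarith [hd]]


lemma sum_exp_eq (n : ℕ) (t : ℝ) :
    ∑ k ∈ Finset.Icc (-(n : ℤ)) (n : ℤ), Complex.exp (Complex.I * (k : ℂ) * (t : ℂ))
      = (((1 + 2 * ∑ k ∈ Finset.range n, Real.cos (((k : ℝ)+1)*t)) : ℝ) : ℂ) := by
  induction n with
  | zero => simp
  | succ n ih =>
    have hins : Finset.Icc (-((n+1 : ℕ) : ℤ)) ((n+1 : ℕ) : ℤ)
        = insert (-((n+1 : ℕ) : ℤ)) (insert ((n+1 : ℕ) : ℤ) (Finset.Icc (-(n : ℤ)) (n : ℤ))) := by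
      ext k; simp [Finset.mem_Icc]; omega
    rw [hins, Finset.sum_insert (by simp; omega), Finset.sum_insert (by simp), ih]
    rw [Finset.sum_range_succ]
    set θ : ℝ := ((n:ℝ)+1)*t with hθ
    have e1 : Complex.I * (((n+1 : ℕ) : ℤ) : ℂ) * (t : ℂ) = (θ : ℂ) * Complex.I := by
      rw [hθ]; push_cast; ring
    have e2 : Complex.I * (Int.cast (-((n+1 : ℕ) : ℤ)) : ℂ) * (t : ℂ) = ((-θ : ℝ) : ℂ) * Complex.I := by
      rw [hθ]; push_cast; ring
    rw [e1, e2, Complex.exp_mul_I, Complex.exp_mul_I]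
    rw [← Complex.ofReal_cos, ← Complex.ofReal_sin, ← Complex.ofReal_cos, ← Complex.ofReal_sin]
    rw [Real.cos_neg, Real.sin_neg]
    push_cast
    ring


theorem dirichlet_kernel_alexiewicz_bounded (n : ℕ) :
    sSup {r : ℝ | ∃ α β : ℝ, α ≤ β ∧ β ≤ α + 2 * π ∧
      r = ‖(∫ t in α..β, ∑ k ∈ Finset.Icc (-(n : ℤ)) (n : ℤ),
        Complex.exp (Complex.I * (k : ℂ) * (t : ℂ)))‖}
    ≤ 4 * π := by
  have hπ := Real.pi_pos
  apply Real.sSup_le _ (by linarith)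
  rintro r ⟨α, β, h1, h2, rfl⟩
  simp only [sum_exp_eq]
  rw [intervalIntegral.integral_ofReal]
  rw [Complex.norm_real, Real.norm_eq_abs]
  rw [integral_D n α β]
  exact Fd_main n h1 h2
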